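/- (Hölder inequality for normed order ideals) Let E ⊆ S(m) be a normed order ideal of measurable functions on [0,∞), i.e. a linear subspace with a norm ‖·‖_E such that if x ∈ E, y ∈ S(m) and |y| ≤ |x| then y ∈ E and ‖y‖_E ≤ ‖x‖_E. Let r, p, q > 0 satisfy 1/r = 1/p + 1/q. If |x|^p ∈ E and |y|^q ∈ E, then |xy|^r ∈ E and ‖|xy|^r‖_E^{1/r} ≤ ‖|x|^p‖_E^{1/p} · ‖|y|^q‖_E^{1/q}. -/

import Mathlib

open scoped ENNReal
open MeasureTheory

noncomputable section

/-- A normed order ideal `E ⊆ S(m)` of measurable functions on `[0,∞)`: a linear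
subspace with a norm such that `f ∈ E` and `|g| ≤ |f|` (pointwise on `[0,∞)`) imply
`g ∈ E` and `‖g‖_E ≤ ‖f‖_E`. -/
structure NormedOrderIdeal where
  /-- membership in `E` -/
  mem : (ℝ → ℝ) → Prop
  /-- the norm `‖·‖_E` -/
  norm : (ℝ → ℝ) → ℝ
  mem_measurable : ∀ {f}, mem f → Measurable f
  zero_mem : mem 0
  add_mem : ∀ {f g}, mem f → mem g → mem (f + g)
  smul_mem : ∀ (c : ℝ) {f}, mem f → mem (c • f)
  norm_nonneg : ∀ {f}, mem f → 0 ≤ norm f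
  norm_triangle : ∀ {f g}, mem f → mem g → norm (f + g) ≤ norm f + norm g
  norm_smul : ∀ (c : ℝ) {f}, mem f → norm (c • f) = |c| * norm f
  /-- the order ideal property of `E` -/
  ideal : ∀ {f g}, mem f → Measurable g → (∀ s : ℝ, 0 ≤ s → |g s| ≤ |f s|) →
    mem g ∧ norm g ≤ norm f

/-- Hölder inequality for normed order ideals: if `1/r = 1/p + 1/q`
with `r, p, q > 0`, `|x|^p ∈ E` and `|y|^q ∈ E`, then `|xy|^r ∈ E` and
`‖|xy|^r‖^{1/r} ≤ ‖|x|^p‖^{1/p} ‖|y|^q‖^{1/q}`. -/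
theorem holder_normed_order_ideal (E : NormedOrderIdeal)
    (r p q : ℝ) (hr : 0 < r) (hp : 0 < p) (hq : 0 < q) (hrpq : 1/r = 1/p + 1/q)
    (x y : ℝ → ℝ)
    (hx : E.mem fun s => |x s| ^ p) (hy : E.mem fun s => |y s| ^ q) :
    E.mem (fun s => |x s * y s| ^ r) ∧
      E.norm (fun s => |x s * y s| ^ r) ^ (1/r) ≤
        E.norm (fun s => |x s| ^ p) ^ (1/p) * E.norm (fun s => |y s| ^ q) ^ (1/q) := by
  have hrel : p * q = r * q + r * p := by
    field_simp at hrpq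
    linarith
  have hsum : r / p + r / q = 1 := by
    field_simp
    linarith
  -- measurability of the target function
  have mx : Measurable fun s => |x s| := by
    have h1 := E.mem_measurable hx
    have h2 : (fun s => |x s|) = fun s => ((|x s|) ^ p) ^ p⁻¹ :=
      funext fun s => (Real.rpow_rpow_inv (abs_nonneg _) hp.ne').symm
    rw [h2]
    exact (Real.continuous_rpow_const (by positivity)).measurable.comp h1
  have my : Measurable fun s => |y s| := by
    have h1 := E.mem_measurable hy
    have h2 : (fun s => |y s|) = fun s => ((|y s|) ^ q) ^ q⁻¹ :=
      funext fun s => (Real.rpow_rpow_inv (abs_nonneg _) hq.ne').symm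
    rw [h2]
    exact (Real.continuous_rpow_const (by positivity)).measurable.comp h1
  have mxy : Measurable fun s => |x s * y s| ^ r := by
    have h2 : (fun s => |x s * y s| ^ r) = fun s => (|x s| * |y s|) ^ r := by
      funext s; rw [abs_mul]
    rw [h2]
    exact (Real.continuous_rpow_const hr.le).measurable.comp (mx.mul my)
  -- conjugate exponents p/r, q/r
  have hrltp : r < p := by
    have h1 : 1/p < 1/r := by
      have : 0 < 1/q := by positivity
      linarith
    exact lt_of_one_div_lt_one_div hp h1
  have hconj : (p/r).HolderConjugate (q/r) := by
    rw [Real.holderConjugate_iff]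
    constructor
    · exact (one_lt_div hr).mpr hrltp
    · rw [inv_div, inv_div]
      linarith [hsum]
  -- pointwise Young inequality with scaling parameter t
  have young : ∀ t : ℝ, 0 < t → ∀ s : ℝ,
      |x s * y s| ^ r ≤ (r/p * t^p) * |x s| ^ p + (r/q * t^(-q)) * |y s| ^ q := by
    intro t ht s
    have ha : (0:ℝ) ≤ t * |x s| := by positivity
    have hb : (0:ℝ) ≤ |y s| / t := by positivity
    have key := Real.young_inequality_of_nonneg
      (Real.rpow_nonneg ha r) (Real.rpow_nonneg hb r) hconj
    have hab : (t * |x s|) ^ r * (|y s| / t) ^ r = |x s * y s| ^ r := by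
      rw [← Real.mul_rpow ha hb, abs_mul]
      congr 1
      field_simp
    have h1 : ((t * |x s|) ^ r) ^ (p/r) = t^p * |x s| ^ p := by
      rw [← Real.rpow_mul ha, mul_comm r (p/r), div_mul_cancel₀ p hr.ne',
        Real.mul_rpow ht.le (abs_nonneg _)]
    have h2 : ((|y s| / t) ^ r) ^ (q/r) = |y s| ^ q * t^(-q) := by
      rw [← Real.rpow_mul hb, mul_comm r (q/r), div_mul_cancel₀ q hr.ne',
        Real.div_rpow (abs_nonneg _) ht.le, Real.rpow_neg ht.le, div_eq_mul_inv]
    rw [hab, h1, h2] at key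
    calc |x s * y s| ^ r ≤ t^p * |x s| ^ p / (p/r) + |y s| ^ q * t^(-q) / (q/r) := key
      _ = (r/p * t^p) * |x s| ^ p + (r/q * t^(-q)) * |y s| ^ q := by
          rw [div_div_eq_mul_div, div_div_eq_mul_div]
          field_simp
  -- the key bound for every t > 0
  have key : ∀ t : ℝ, 0 < t → E.mem (fun s => |x s * y s| ^ r) ∧
      E.norm (fun s => |x s * y s| ^ r) ≤
        (r/p * t^p) * E.norm (fun s => |x s| ^ p) +
        (r/q * t^(-q)) * E.norm (fun s => |y s| ^ q) := by
    intro t ht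
    have c1 : (0:ℝ) ≤ r/p * t^p := by positivity
    have c2 : (0:ℝ) ≤ r/q * t^(-q) := by positivity
    have hmemh : E.mem ((r/p * t^p) • (fun s => |x s| ^ p) +
        (r/q * t^(-q)) • (fun s => |y s| ^ q)) :=
      E.add_mem (E.smul_mem _ hx) (E.smul_mem _ hy)
    have hdom : ∀ s : ℝ, 0 ≤ s → |(fun s => |x s * y s| ^ r) s| ≤
        |((r/p * t^p) • (fun s => |x s| ^ p) +
          (r/q * t^(-q)) • (fun s => |y s| ^ q)) s| := by
      intro s _
      have h1 : (0:ℝ) ≤ |x s * y s| ^ r := Real.rpow_nonneg (abs_nonneg _) r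
      have h2 : (0:ℝ) ≤ (r/p * t^p) * |x s| ^ p + (r/q * t^(-q)) * |y s| ^ q := by
        have := Real.rpow_nonneg (abs_nonneg (x s)) p
        have := Real.rpow_nonneg (abs_nonneg (y s)) q
        positivity
    
      simp only [Pi.add_apply, Pi.smul_apply, smul_eq_mul]
      rw [abs_of_nonneg h1, abs_of_nonneg h2]
      exact young t ht s
    obtain ⟨hmem, hle⟩ := E.ideal hmemh mxy hdom
    refine ⟨hmem, hle.trans ?_⟩
    calc E.norm ((r/p * t^p) • (fun s => |x s| ^ p) +
          (r/q * t^(-q)) • (fun s => |y s| ^ q))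
        ≤ E.norm ((r/p * t^p) • (fun s => |x s| ^ p)) +
          E.norm ((r/q * t^(-q)) • (fun s => |y s| ^ q)) :=
          E.norm_triangle (E.smul_mem _ hx) (E.smul_mem _ hy)
      _ = (r/p * t^p) * E.norm (fun s => |x s| ^ p) +
          (r/q * t^(-q)) * E.norm (fun s => |y s| ^ q) := by
          rw [E.norm_smul _ hx, E.norm_smul _ hy, abs_of_nonneg c1, abs_of_nonneg c2]
  have hmem := (key 1 one_pos).1
  refine ⟨hmem, ?_⟩
  set A := E.norm (fun s => |x s| ^ p) with hA
  set B := E.norm (fun s => |y s| ^ q) with hB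
  set N := E.norm (fun s => |x s * y s| ^ r) with hN
  have hA0 : 0 ≤ A := E.norm_nonneg hx
  have hB0 : 0 ≤ B := E.norm_nonneg hy
  have hN0 : 0 ≤ N := E.norm_nonneg hmem
  -- main bound: N ≤ A^(r/p) * B^(r/q)
  have main : N ≤ A ^ (r/p) * B ^ (r/q) := by
    rcases eq_or_lt_of_le hA0 with hA1 | hApos
    · -- A = 0 : N ≤ (r/q) t^(-q) B → 0 as t → ∞
      have hNle : N ≤ 0 := by
        have htend : Filter.Tendsto (fun t : ℝ => (r/q * t^(-q)) * B)
            Filter.atTop (nhds 0) := by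
          have := ((tendsto_rpow_neg_atTop hq).const_mul (r/q)).mul_const B
          simpa using this
        refine ge_of_tendsto htend ?_
        filter_upwards [Filter.eventually_gt_atTop 0] with t ht
        have := (key t ht).2
        rw [← hA1] at this
        simpa using this
      have : N = 0 := le_antisymm hNle hN0
      rw [this, ← hA1, Real.zero_rpow (by positivity : r/p ≠ 0), zero_mul]
    rcases eq_or_lt_of_le hB0 with hB1 | hBpos
    · -- B = 0
      have hNle : N ≤ 0 := by
        have htend : Filter.Tendsto (fun t : ℝ => (r/p * t^p) * A)
            (nhdsWithin 0 (Set.Ioi 0)) (nhds 0) := by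
          have h1 : Filter.Tendsto (fun t : ℝ => t ^ p) (nhds 0) (nhds 0) := by
            have := (Real.continuous_rpow_const hp.le).tendsto 0
            simpa [Real.zero_rpow hp.ne'] using this
          have h2 := (h1.const_mul (r/p)).mul_const A
          simpa using h2.mono_left nhdsWithin_le_nhds
        refine ge_of_tendsto htend ?_
        filter_upwards [self_mem_nhdsWithin] with t ht
        have := (key t ht).2
        rw [← hB1] at this
        simpa using this
      have : N = 0 := le_antisymm hNle hN0
      rw [this, ← hB1, Real.zero_rpow (by positivity : r/q ≠ 0), mul_zero]
    · -- A, B > 0 : optimize over t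
      set t0 : ℝ := A ^ ((r/p - 1)/p) * B ^ ((r/q)/p) with ht0
      have ht0pos : 0 < t0 := by
        apply mul_pos <;> exact Real.rpow_pos_of_pos (by assumption) _
      have e1 : t0 ^ p = A ^ (r/p - 1) * B ^ (r/q) := by
        rw [ht0, Real.mul_rpow (by positivity) (by positivity),
          ← Real.rpow_mul hA0, ← Real.rpow_mul hB0,
          div_mul_cancel₀ _ hp.ne', div_mul_cancel₀ _ hp.ne']
      have e2 : t0 ^ (-q) = A ^ (r/p) * B ^ (r/q - 1) := by
        rw [ht0, Real.mul_rpow (by positivity) (by positivity),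
          ← Real.rpow_mul hA0, ← Real.rpow_mul hB0]
        congr 2
        · field_simp
          nlinarith [hrel]
        · field_simp
          nlinarith [hrel]
      have hA1 : A ^ (r/p - 1) * A = A ^ (r/p) := by
        rw [← Real.rpow_add_one hApos.ne', sub_add_cancel]
      have hB1 : B ^ (r/q - 1) * B = B ^ (r/q) := by
        rw [← Real.rpow_add_one hBpos.ne', sub_add_cancel]
      have hval : (r/p * t0^p) * A + (r/q * t0^(-q)) * B = A ^ (r/p) * B ^ (r/q) := by
        rw [e1, e2]
        have expand : r/p * (A ^ (r/p - 1) * B ^ (r/q)) * A +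
            r/q * (A ^ (r/p) * B ^ (r/q - 1)) * B =
            (r/p + r/q) * (A ^ (r/p) * B ^ (r/q)) := by
          rw [← hA1, ← hB1]; ring
        rw [expand, hsum, one_mul]
      exact (key t0 ht0pos).2.trans_eq hval
  -- conclude
  have hfinal : N ^ (1/r) ≤ (A ^ (r/p) * B ^ (r/q)) ^ (1/r) :=
    Real.rpow_le_rpow hN0 main (by positivity)
  refine hfinal.trans_eq ?_
  rw [Real.mul_rpow (by positivity) (by positivity),
    ← Real.rpow_mul hA0, ← Real.rpow_mul hB0]
  congr 2 <;> field_simp <;> ring
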